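/- Let $d \ge 1$ and let $\mu$ be a Borel probability measure on the unit sphere $S^{d-1} \subset \mathbb{R}^d$. If $u, v$ are drawn independently according to $\mu$, then the probability that $u \perp v$ (i.e. $\langle u, v \rangle = 0$) is at most $(d-1)/d$. -/

import Mathlib

open MeasureTheory
open scoped RealInnerProductSpace

section aux
variable {d : ℕ}

lemma coord_abs_le_norm (u : EuclideanSpace ℝ (Fin d)) (i : Fin d) : |u i| ≤ ‖u‖ := by
  have h1 : ‖u i‖^2 ≤ ∑ j, ‖u j‖^2 :=
    Finset.single_le_sum (f := fun j => ‖u j‖^2) (fun j _ => by positivity) (Finset.mem_univ i)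
  rw [EuclideanSpace.norm_eq]
  have h0 : |u i| = Real.sqrt (‖u i‖^2) := by
    rw [Real.sqrt_sq (norm_nonneg _)]; exact (Real.norm_eq_abs _).symm
  rw [h0]; exact Real.sqrt_le_sqrt h1

end aux

theorem orth_prob_le (d : ℕ) (hd : 1 ≤ d)
    (μ : Measure (EuclideanSpace ℝ (Fin d))) [IsProbabilityMeasure μ]
    (hμ : μ (Metric.sphere (0 : EuclideanSpace ℝ (Fin d)) 1) = 1) :
    (μ.prod μ) {p : EuclideanSpace ℝ (Fin d) × EuclideanSpace ℝ (Fin d) | ⟪p.1, p.2⟫ = 0}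
      ≤ ENNReal.ofReal (((d : ℝ) - 1) / d) := by
  set E := EuclideanSpace ℝ (Fin d)
  -- a.e. on the sphere
  have hsph : ∀ᵐ u ∂μ, ‖u‖ = 1 := by
    have hc : μ (Metric.sphere (0 : E) 1)ᶜ = 0 := by
      rw [measure_compl Metric.isClosed_sphere.measurableSet (measure_ne_top μ _), hμ,
        measure_univ, tsub_self]
    filter_upwards [measure_eq_zero_iff_ae_notMem.mp hc] with u hu
    simpa [Metric.mem_sphere, dist_zero_right] using not_not.mp (by simpa using hu)
  -- integrability of coordinate products
  have hint : ∀ i j : Fin d, Integrable (fun u : E => u i * u j) μ := by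
    intro i j
    refine (integrable_const (1:ℝ)).mono' ?_ ?_
    · exact (((EuclideanSpace.proj (𝕜 := ℝ) i).continuous.mul
        (EuclideanSpace.proj (𝕜 := ℝ) j).continuous).measurable.aestronglyMeasurable)
    · filter_upwards [hsph] with u hu
      have h1 := coord_abs_le_norm u i
      have h2 := coord_abs_le_norm u j
      rw [hu] at h1 h2
      calc ‖u i * u j‖ = |u i| * |u j| := by rw [Real.norm_eq_abs, abs_mul]
        _ ≤ 1 * 1 := mul_le_mul h1 h2 (abs_nonneg _) zero_le_one
        _ = 1 := one_mul 1
  set f : Fin d → Fin d → ℝ := fun i j => ∫ u, u i * u j ∂μ with hf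
  -- trace = 1
  have htrace : ∑ i, f i i = 1 := by
    rw [← integral_finset_sum _ (fun i _ => hint i i)]
    have : ∫ u : E, ∑ i, u i * u i ∂μ = ∫ _u : E, (1:ℝ) ∂μ := by
      refine integral_congr_ae ?_
      filter_upwards [hsph] with u hu
      have : (∑ i, u i * u i) = ⟪u, u⟫ := by
        rw [PiLp.inner_apply]; simp [RCLike.inner_apply, sq]
      rw [this, real_inner_self_eq_norm_sq, hu, one_pow]
    rw [this, integral_const, probReal_univ, one_smul]
  -- second moment identity
  have hmom : ∫ p : E × E, ⟪p.1, p.2⟫^2 ∂(μ.prod μ) = ∑ i, ∑ j, (f i j)^2 := by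
    have hexp : ∀ p : E × E, ⟪p.1, p.2⟫^2
        = ∑ i, ∑ j, (p.1 i * p.1 j) * (p.2 i * p.2 j) := by
      intro p
      have : ⟪p.1, p.2⟫ = ∑ i, p.1 i * p.2 i := by
        rw [PiLp.inner_apply]; simp [RCLike.inner_apply, mul_comm]
      rw [this, sq, Finset.sum_mul_sum]
      congr 1; ext i; congr 1; ext j; ring
    simp_rw [hexp]
    rw [integral_finset_sum]
    · refine Finset.sum_congr rfl fun i _ => ?_
      rw [integral_finset_sum]
      · refine Finset.sum_congr rfl fun j _ => ?_
        rw [integral_prod_mul (f := fun u : E => u i * u j) (g := fun v : E => v i * v j), sq]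
      · exact fun j _ => (hint i j).mul_prod (hint i j)
    · intro i _
      exact integrable_finset_sum _ (fun j _ => (hint i j).mul_prod (hint i j))
  -- lower bound 1/d
  have hd0 : (0:ℝ) < d := by exact_mod_cast hd
  have hlow : (1:ℝ)/d ≤ ∫ p : E × E, ⟪p.1, p.2⟫^2 ∂(μ.prod μ) := by
    rw [hmom]
    have h1 : ∑ i, (f i i)^2 ≤ ∑ i, ∑ j, (f i j)^2 :=
      Finset.sum_le_sum fun i _ =>
        Finset.single_le_sum (f := fun j => (f i j)^2) (fun j _ => sq_nonneg _)
          (Finset.mem_univ i)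
    have h2 : (1:ℝ) ≤ d * ∑ i, (f i i)^2 := by
      have := sq_sum_le_card_mul_sum_sq (s := Finset.univ) (f := fun i => f i i)
      rw [htrace, one_pow] at this
      simpa using this
    have : (1:ℝ)/d ≤ ∑ i, (f i i)^2 := by
      rw [div_le_iff₀ hd0] at *
      linarith [h2]
    linarith
  -- measurable orthogonality set
  set A : Set (E × E) := {p : E × E | ⟪p.1, p.2⟫ = 0} with hA
  have hAm : MeasurableSet A :=
    (continuous_inner (𝕜 := ℝ) (E := E)).measurable (measurableSet_singleton (0:ℝ))
  -- upper bound by measure of complement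
  have hsph2 : ∀ᵐ p : E × E ∂(μ.prod μ), ‖p.1‖ = 1 ∧ ‖p.2‖ = 1 := by
    have hS : (μ.prod μ) ((Metric.sphere (0:E) 1) ×ˢ (Metric.sphere (0:E) 1)) = 1 := by
      rw [Measure.prod_prod, hμ, mul_one]
    have hc : (μ.prod μ) ((Metric.sphere (0:E) 1) ×ˢ (Metric.sphere (0:E) 1))ᶜ = 0 := by
      rw [measure_compl (Metric.isClosed_sphere.measurableSet.prod
        Metric.isClosed_sphere.measurableSet) (measure_ne_top _ _), hS, measure_univ, tsub_self]
    filter_upwards [measure_eq_zero_iff_ae_notMem.mp hc] with p hp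
    exact not_not.mp (by simpa using hp)
  have hub : ∫ p : E × E, ⟪p.1, p.2⟫^2 ∂(μ.prod μ) ≤ ((μ.prod μ) Aᶜ).toReal := by
    have hind : ∫ p : E × E, Aᶜ.indicator (fun _ => (1:ℝ)) p ∂(μ.prod μ)
        = ((μ.prod μ) Aᶜ).toReal := by
      rw [integral_indicator hAm.compl]; simp; rfl
    rw [← hind]
    refine integral_mono_ae ?_ ?_ ?_
    · -- integrability of inner^2
      refine (integrable_const (1:ℝ)).mono' ?_ ?_
      · exact ((continuous_inner (𝕜 := ℝ) (E := E)).pow 2).measurable.aestronglyMeasurable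
      · filter_upwards [hsph2] with p hp
        have hcs := abs_real_inner_le_norm p.1 p.2
        rw [hp.1, hp.2, mul_one] at hcs
        calc ‖⟪p.1, p.2⟫^2‖ = |⟪p.1, p.2⟫|^2 := by
              rw [Real.norm_eq_abs, abs_pow]
          _ ≤ 1^2 := by gcongr
          _ = 1 := one_pow 2
    · exact (integrable_const (1:ℝ)).indicator hAm.compl
    · -- pointwise: inner^2 ≤ indicator
      filter_upwards [hsph2] with p hp
      by_cases h0 : ⟪p.1, p.2⟫ = 0
      · have hnn : (0:ℝ) ≤ Set.indicator Aᶜ (fun _ => (1:ℝ)) p :=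
          Set.indicator_nonneg (fun _ _ => zero_le_one) p
        simpa [h0] using hnn
      · have hmem : p ∈ Aᶜ := h0
        rw [Set.indicator_of_mem hmem]
        have hcs := abs_real_inner_le_norm p.1 p.2
        rw [hp.1, hp.2, mul_one] at hcs
        calc ⟪p.1, p.2⟫^2 = |⟪p.1, p.2⟫|^2 := (sq_abs _).symm
          _ ≤ 1^2 := by gcongr
          _ = 1 := one_pow 2
  -- finish
  have hAne : (μ.prod μ) A ≠ ⊤ := measure_ne_top _ _
  have hsplit : ((μ.prod μ) A).toReal = 1 - ((μ.prod μ) Aᶜ).toReal := by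
    have := measure_compl hAm (measure_ne_top (μ.prod μ) A)
    rw [measure_univ] at this
    have h1 : ((μ.prod μ) Aᶜ).toReal = 1 - ((μ.prod μ) A).toReal := by
      rw [this, ENNReal.toReal_sub_of_le prob_le_one (by simp), ENNReal.toReal_one]
    linarith
  have hfinal : ((μ.prod μ) A).toReal ≤ ((d:ℝ) - 1)/d := by
    have h1 : (1:ℝ)/d ≤ ((μ.prod μ) Aᶜ).toReal := le_trans hlow hub
    rw [hsplit]
    rw [sub_div, div_self (ne_of_gt hd0)]
    linarith
  calc (μ.prod μ) A = ENNReal.ofReal (((μ.prod μ) A).toReal) := (ENNReal.ofReal_toReal hAne).symm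
    _ ≤ ENNReal.ofReal (((d:ℝ) - 1)/d) := ENNReal.ofReal_le_ofReal hfinal
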